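/- Let E be a real Banach space and α : E → E* a continuously differentiable map into the topological dual of E whose derivative is symmetric: (Dα(x)u)(v) = (Dα(x)v)(u) for all x, u, v ∈ E. Then α admits a potential: the function H(x) = ∫₀¹ α(tx)(x) dt is differentiable and satisfies DH(x) = α(x) for every x ∈ E. -/

import Mathlib

set_option maxHeartbeats 1000000
set_option synthInstance.maxHeartbeats 200000

open Metric MeasureTheory intervalIntegral Set ContinuousLinearMap

/-- Volterra–Tonti–Vainberg construction: a `C¹` map `α : E → E*` with symmetric
derivative (Helmholtz condition) is the differential of the explicit potential
`H(x) = ∫₀¹ α(tx)(x) dt`. -/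
theorem stmt3 (E : Type*) [NormedAddCommGroup E] [NormedSpace ℝ E] [CompleteSpace E]
    (α : E → (E →L[ℝ] ℝ)) (hα : ContDiff ℝ 1 α)
    (hsym : ∀ x u v : E, fderiv ℝ α x u v = fderiv ℝ α x v u) :
    ∀ x : E, HasFDerivAt (fun y : E => ∫ t in (0:ℝ)..1, α (t • y) y) (α x) x := by
  intro x
  have hαc : Continuous α := hα.continuous
  have hdα : Differentiable ℝ α := hα.differentiable one_ne_zero
  have hfc : Continuous (fderiv ℝ α) := hα.continuous_fderiv one_ne_zero
  -- compact segment and bound on a thickening of it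
  set K : Set E := (fun t : ℝ => t • x) '' Set.Icc (0:ℝ) 1 with hKdef
  have hKc : IsCompact K := isCompact_Icc.image (by fun_prop)
  have hKne : K.Nonempty :=
    ⟨(0:ℝ) • x, Set.mem_image_of_mem _ (Set.mem_Icc.2 ⟨le_rfl, zero_le_one⟩)⟩
  set g : E → ℝ := fun z => ‖α z‖ + ‖fderiv ℝ α z‖ with hgdef
  have hgc : Continuous g := hαc.norm.add (Continuous.norm (E := E →L[ℝ] E →L[ℝ] ℝ) hfc)
  obtain ⟨z₀, hz₀K, hz₀⟩ := hKc.exists_isMaxOn hKne hgc.continuousOn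
  set M : ℝ := g z₀ + 1 with hMdef
  have hM0 : 0 < M := by
    have : 0 ≤ g z₀ := add_nonneg (norm_nonneg _) (norm_nonneg (fderiv ℝ α z₀))
    linarith
  have hU : IsOpen (g ⁻¹' Set.Iio M) := isOpen_Iio.preimage hgc
  have hKU : K ⊆ g ⁻¹' Set.Iio M := fun z hz => by
    have := hz₀ hz
    simp only [Set.mem_preimage, Set.mem_Iio, hMdef]
    exact lt_of_le_of_lt this (by linarith)
  obtain ⟨ε, εpos, hth⟩ := hKc.exists_thickening_subset_open hU hKU
  have hmem : ∀ t ∈ Set.Icc (0:ℝ) 1, ∀ y ∈ ball x ε, g (t • y) < M := by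
    intro t ht y hy
    have h1 : t • x ∈ K := ⟨t, ht, rfl⟩
    have h2 : dist (t • y) (t • x) < ε := by
      rw [dist_smul₀]
      calc ‖t‖ * dist y x ≤ 1 * dist y x := by
            apply mul_le_mul_of_nonneg_right _ dist_nonneg
            rw [Real.norm_eq_abs, abs_le]; constructor <;> linarith [ht.1, ht.2]
        _ = dist y x := one_mul _
        _ < ε := hy
    have : t • y ∈ thickening ε K := mem_thickening_iff.2 ⟨t • x, h1, h2⟩
    exact hth this
  -- the derivative of the integrand in y
  set F' : E → ℝ → E →L[ℝ] ℝ := fun y t =>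
    α (t • y) + t • ((fderiv ℝ α (t • y)).flip y) with hF'def
  have h_diff : ∀ (t : ℝ) (y : E),
      HasFDerivAt (fun y : E => α (t • y) y) (F' y t) y := by
    intro t y
    have hm : HasFDerivAt (fun y : E => t • y)
        (t • ContinuousLinearMap.id ℝ E) y :=
      (t • ContinuousLinearMap.id ℝ E).hasFDerivAt
    have hc : HasFDerivAt (fun y : E => α (t • y))
        ((fderiv ℝ α (t • y)).comp (t • ContinuousLinearMap.id ℝ E)) y :=
      (hdα (t • y)).hasFDerivAt.comp y hm
    have := hc.clm_apply (hasFDerivAt_id y)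
    refine this.congr_fderiv ?_
    ext v
    simp [hF'def, mul_comm]
  -- uniform bound for the derivative on the ball
  have h_bound : ∀ t ∈ Set.Icc (0:ℝ) 1, ∀ y ∈ ball x ε,
      ‖F' y t‖ ≤ M * (1 + ‖x‖ + ε) := by
    intro t ht y hy
    have hg := hmem t ht y hy
    have hα1 : ‖α (t • y)‖ ≤ M := by
      have := norm_nonneg (fderiv ℝ α (t • y)); simp only [hgdef] at hg; linarith
    have hf1 : ‖fderiv ℝ α (t • y)‖ ≤ M := by
      have := norm_nonneg (α (t • y)); simp only [hgdef] at hg; linarith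
    have hy1 : ‖y‖ ≤ ‖x‖ + ε := by
      have : dist y x < ε := hy
      calc ‖y‖ ≤ ‖x‖ + ‖y - x‖ := by
            have := norm_add_le x (y - x); simpa using this
        _ ≤ ‖x‖ + ε := by
            have : ‖y - x‖ < ε := by rwa [← dist_eq_norm]
            linarith
    calc ‖F' y t‖ ≤ ‖α (t • y)‖ + ‖t • ((fderiv ℝ α (t • y)).flip y)‖ := norm_add_le _ _
      _ = ‖α (t • y)‖ + ‖t‖ * ‖(fderiv ℝ α (t • y)).flip y‖ := by rw [norm_smul]
      _ ≤ M + 1 * (‖(fderiv ℝ α (t • y)).flip‖ * ‖y‖) := by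
          have h2 : ‖(fderiv ℝ α (t • y)).flip y‖ ≤ ‖(fderiv ℝ α (t • y)).flip‖ * ‖y‖ :=
            le_opNorm _ _
          have ht1 : ‖t‖ ≤ 1 := by
            rw [Real.norm_eq_abs, abs_le]; constructor <;> linarith [ht.1, ht.2]
          have := mul_le_mul ht1 h2 (norm_nonneg _) zero_le_one
          linarith
      _ ≤ M + M * (‖x‖ + ε) := by
          rw [one_mul, (fderiv ℝ α (t • y)).opNorm_flip]
          have h3 : ‖fderiv ℝ α (t • y)‖ * ‖y‖ ≤ M * (‖x‖ + ε) :=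
            mul_le_mul hf1 hy1 (norm_nonneg _) hM0.le
          linarith
      _ = M * (1 + ‖x‖ + ε) := by ring
  -- continuity in t of integrand and derivative
  have hcont : ∀ y : E, Continuous fun t : ℝ => α (t • y) y := by
    intro y; fun_prop
  have hcontF' : Continuous fun t : ℝ => F' x t := by
    have h1 : Continuous fun t : ℝ => fderiv ℝ α (t • x) := by fun_prop
    have h2 : Continuous fun t : ℝ => (fderiv ℝ α (t • x)).flip x := by
      have : Continuous fun t : ℝ => (fderiv ℝ α (t • x)).flip :=
        (flipₗᵢ ℝ E E ℝ).continuous.comp h1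
      exact this.clm_apply continuous_const
    exact (hαc.comp (by fun_prop)).add (continuous_id.smul h2)
  -- differentiation under the integral sign
  have key : HasFDerivAt (fun y : E => ∫ t in (0:ℝ)..1, α (t • y) y)
      (∫ t in (0:ℝ)..1, F' x t) x := by
    apply intervalIntegral.hasFDerivAt_integral_of_dominated_of_fderiv_le
      (F := fun y t => α (t • y) y) (bound := fun _ => M * (1 + ‖x‖ + ε)) (ball_mem_nhds x εpos)
    · exact Filter.Eventually.of_forall fun y => (hcont y).aestronglyMeasurable
    · exact (hcont x).intervalIntegrable 0 1
    · exact hcontF'.aestronglyMeasurable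
    · apply Filter.Eventually.of_forall
      intro t ht y hy
      have ht' : t ∈ Set.Ioc (0:ℝ) 1 := by
        rwa [Set.uIoc_of_le zero_le_one] at ht
      exact h_bound t (Set.mem_Icc_of_Ioc ht') y hy
    · exact intervalIntegrable_const
    · exact Filter.Eventually.of_forall fun t _ y _ => h_diff t y
  -- compute the integral of the derivative
  have hint : (∫ t in (0:ℝ)..1, F' x t) = α x := by
    ext v
    have hI : IntervalIntegrable (fun t => F' x t) volume 0 1 :=
      hcontF'.intervalIntegrable 0 1
    have happ : (∫ t in (0:ℝ)..1, F' x t) v = ∫ t in (0:ℝ)..1, F' x t v := by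
      rw [intervalIntegral.integral_of_le zero_le_one,
        intervalIntegral.integral_of_le zero_le_one]
      exact ContinuousLinearMap.integral_apply hI.1 v
    rw [happ]
    -- FTC for g t = t * α (t • x) v
    have hft : ∀ t : ℝ, HasDerivAt (fun t : ℝ => t * α (t • x) v)
        (α (t • x) v + t * fderiv ℝ α (t • x) x v) t := by
      intro t
      have hm : HasDerivAt (fun t : ℝ => t • x) x t := by
        simpa using (hasDerivAt_id t).smul_const x
      have h1 : HasDerivAt (fun t : ℝ => α (t • x))
          (fderiv ℝ α (t • x) x) t :=
        (hdα (t • x)).hasFDerivAt.comp_hasDerivAt t hm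
      have h2 : HasDerivAt (fun t : ℝ => α (t • x) v)
          (fderiv ℝ α (t • x) x v) t :=
        ((ContinuousLinearMap.apply ℝ ℝ v).hasFDerivAt.comp_hasDerivAt t h1)
      have := (hasDerivAt_id' t).mul h2
      exact this.congr_deriv (by ring)
    have hderivc : Continuous fun t : ℝ =>
        α (t • x) v + t * fderiv ℝ α (t • x) x v := by fun_prop
    have hFTC := intervalIntegral.integral_eq_sub_of_hasDerivAt
      (f := fun t : ℝ => t * α (t • x) v)
      (fun t _ => hft t) (hderivc.intervalIntegrable 0 1)
    have heq : ∀ t : ℝ, F' x t v = α (t • x) v + t * fderiv ℝ α (t • x) x v := by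
      intro t
      simp [hF'def, hsym (t • x) v x]
    calc (∫ t in (0:ℝ)..1, F' x t v)
        = ∫ t in (0:ℝ)..1, (α (t • x) v + t * fderiv ℝ α (t • x) x v) := by
          apply intervalIntegral.integral_congr; intro t _; exact heq t
      _ = (fun t : ℝ => t * α (t • x) v) 1 - (fun t : ℝ => t * α (t • x) v) 0 := hFTC
      _ = α x v := by simp
  rw [hint] at key
  exact key
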